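/- A centrally symmetric n-dimensional polytope P ⊂ ℝⁿ with exactly 2n vertices is affinely equivalent (in fact linearly equivalent) to the n-dimensional cross-polytope conv{±e_1,…,±e_n}. -/

import Mathlib

/-- A polytope: the convex hull of a finite set. -/
def IsPolytope (n : ℕ) (P : Set (Fin n → ℝ)) : Prop :=
  ∃ s : Finset (Fin n → ℝ), P = convexHull ℝ (s : Set (Fin n → ℝ))

/-- The i-th standard basis vector of ℝⁿ. -/
noncomputable def eVec (n : ℕ) (i : Fin n) : Fin n → ℝ := Pi.single i 1

/-- The n-dimensional cross-polytope conv{±e₁,…,±eₙ}. -/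
noncomputable def crossPolytope (n : ℕ) : Set (Fin n → ℝ) :=
  convexHull ℝ {x | ∃ i : Fin n, x = eVec n i ∨ x = -eVec n i}

/-- A centrally symmetric n-dimensional polytope with exactly 2n vertices is
linearly (in particular affinely) equivalent to the n-dimensional cross-polytope. -/
theorem cs_polytope_two_n_vertices_is_cross (n : ℕ) (hn : 1 ≤ n)
    (P : Set (Fin n → ℝ)) (hP : IsPolytope n P) (hsym : -P = P)
    (hdim : affineSpan ℝ P = ⊤)
    (hvert : (Set.extremePoints ℝ P).ncard = 2 * n) :
    ∃ L : (Fin n → ℝ) ≃ₗ[ℝ] (Fin n → ℝ), L '' crossPolytope n = P := by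
  classical
  obtain ⟨s, rfl⟩ := hP
  set E : Set (Fin n → ℝ) := Set.extremePoints ℝ (convexHull ℝ (s : Set (Fin n → ℝ))) with hE
  have hEs : E ⊆ (s : Set (Fin n → ℝ)) := extremePoints_convexHull_subset
  have hEfin : E.Finite := s.finite_toSet.subset hEs
  -- P = convexHull E
  have hPE : convexHull ℝ (s : Set (Fin n → ℝ)) = convexHull ℝ E := by
    have h1 := closure_convexHull_extremePoints (s.finite_toSet.isCompact_convexHull (𝕜 := ℝ))
      (convex_convexHull ℝ _)
    rw [← h1, (hEfin.isClosed_convexHull (𝕜 := ℝ)).closure_eq]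
  -- E is symmetric
  have hEneg : ∀ x ∈ E, -x ∈ E := by
    intro x hx
    have h := image_extremePoints (LinearEquiv.neg ℝ (M := Fin n → ℝ))
      (convexHull ℝ (s : Set (Fin n → ℝ)))
    have hfun : ⇑(LinearEquiv.neg ℝ (M := Fin n → ℝ)) = (fun a => -a) := rfl
    rw [hfun, Set.image_neg_eq_neg, Set.image_neg_eq_neg, hsym] at h
    rw [← hE] at h
    rw [← h, Set.mem_neg, neg_neg]
    exact hx
  -- span E = ⊤
  have hspanE : Submodule.span ℝ E = ⊤ := by
    have hvs : vectorSpan ℝ E = ⊤ := by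
      apply AffineSubspace.vectorSpan_eq_top_of_affineSpan_eq_top ℝ _ _
      rw [← affineSpan_convexHull, ← hPE, hdim]
    refine top_unique ?_
    rw [← hvs, vectorSpan_def]
    refine Submodule.span_le.2 ?_
    rintro v ⟨a, ha, b, hb, rfl⟩
    exact sub_mem (Submodule.subset_span ha) (Submodule.subset_span hb)
  -- choose a basis inside E
  obtain ⟨B, hBE, hBspan, hBli⟩ := exists_linearIndependent ℝ E
  rw [hspanE] at hBspan
  have hBfin : B.Finite := hEfin.subset hBE
  haveI : Fintype B := hBfin.fintype
  let hb : Module.Basis B ℝ (Fin n → ℝ) := Module.Basis.mk hBli (by rw [Subtype.range_val, hBspan])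
  have hcard : Fintype.card B = n := by
    have := Module.finrank_eq_card_basis hb
    rw [Module.finrank_fin_fun] at this
    exact this.symm
  let b : Module.Basis (Fin n) ℝ (Fin n → ℝ) := hb.reindex (Fintype.equivFinOfCardEq hcard)
  have hbmem : ∀ i, b i ∈ E := by
    intro i
    apply hBE
    simp only [b, hb, Module.Basis.coe_reindex, Function.comp_apply, Module.Basis.coe_mk]
    exact Subtype.coe_prop _
  -- b i ≠ -b j
  have hbne : ∀ i j : Fin n, b i ≠ -b j := by
    intro i j h
    have h1 := congrArg (fun v => (b.repr v) i) h
    simp only [Module.Basis.repr_self, map_neg, Finsupp.single_apply, Finsupp.coe_neg,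
      Pi.neg_apply] at h1
    by_cases hij : j = i <;> simp [hij] at h1 <;> linarith
  -- the linear equivalence
  let L : (Fin n → ℝ) ≃ₗ[ℝ] (Fin n → ℝ) := (Pi.basisFun ℝ (Fin n)).equiv b (Equiv.refl _)
  have hLe : ∀ i, L (eVec n i) = b i := by
    intro i
    have h2 := (Pi.basisFun ℝ (Fin n)).equiv_apply (b' := b) (i := i) (e := Equiv.refl _)
    rw [show eVec n i = Pi.basisFun ℝ (Fin n) i from by simp [eVec]]
    exact h2
  refine ⟨L, ?_⟩
  -- image of generating set
  set S : Set (Fin n → ℝ) := {x | ∃ i : Fin n, x = eVec n i ∨ x = -eVec n i} with hS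
  have hLS : L '' S = {x | ∃ i : Fin n, x = b i ∨ x = -b i} := by
    ext x
    constructor
    · rintro ⟨y, ⟨i, hy | hy⟩, rfl⟩
      · exact ⟨i, Or.inl (by rw [hy, hLe])⟩
      · exact ⟨i, Or.inr (by rw [hy, map_neg, hLe])⟩
    · rintro ⟨i, hx | hx⟩
      · exact ⟨eVec n i, ⟨i, Or.inl rfl⟩, by rw [hx, hLe]⟩
      · exact ⟨-eVec n i, ⟨i, Or.inr rfl⟩, by rw [hx, map_neg, hLe]⟩
  -- that set equals E
  have hTE : {x | ∃ i : Fin n, x = b i ∨ x = -b i} = E := by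
    set T : Set (Fin n → ℝ) := {x | ∃ i : Fin n, x = b i ∨ x = -b i} with hT
    have hTsub : T ⊆ E := by
      rintro x ⟨i, hx | hx⟩
      · rw [hx]; exact hbmem i
      · rw [hx]; exact hEneg _ (hbmem i)
    -- T has 2n elements
    have hg : Function.Injective (Sum.elim b (fun i : Fin n => -b i)) := by
      rintro (i | i) (j | j) h <;> simp only [Sum.elim_inl, Sum.elim_inr] at h
      · rw [b.injective h]
      · exact absurd h (hbne i j)
      · exact absurd h.symm (hbne j i)
      · rw [b.injective (neg_injective h)]
    have hrange : Set.range (Sum.elim b (fun i : Fin n => -b i)) = T := by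
      ext x
      constructor
      · rintro ⟨(i | i), rfl⟩
        · exact ⟨i, Or.inl rfl⟩
        · exact ⟨i, Or.inr rfl⟩
      · rintro ⟨i, hx | hx⟩
        · exact ⟨Sum.inl i, hx.symm⟩
        · exact ⟨Sum.inr i, hx.symm⟩
    have hTcard : T.ncard = 2 * n := by
      rw [← hrange, ← Nat.card_coe_set_eq, Nat.card_range_of_injective hg]
      simp [Nat.card_eq_fintype_card, two_mul]
    exact (Set.eq_of_subset_of_ncard_le hTsub (by rw [hvert, hTcard]) hEfin).symm ▸ rfl
  -- conclude
  rw [crossPolytope, ← hS]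
  have himg : L '' convexHull ℝ S = convexHull ℝ (L '' S) := by
    exact (L : (Fin n → ℝ) →ₗ[ℝ] (Fin n → ℝ)).image_convexHull S
  rw [himg, hLS, hTE, ← hPE]
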